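/- Let N ≥ 0 be an integer, let ℓ_0, …, ℓ_N be positive integers, let a be a real number, and define x_{-1} = a, x_0 = 1, and x_{j+1} = x_{j-1} − ℓ_j x_j for 0 ≤ j ≤ N; assume x_j > 0 for 0 ≤ j ≤ N and x_{N+1} = 0. Then Σ_{j=0}^N ℓ_j x_j² = a, Σ_{j=0}^N ℓ_j x_j = a + 1 − x_N, and x_N = 1/q_N, where q_N is the convergent denominator of [ℓ_0; ℓ_1, …, ℓ_N]. (This expresses that the weight expansion w(a) of a rational a = p/q > 1 in lowest terms — the sequence in which x_j occurs with multiplicity ℓ_j — satisfies w·w = a, Σ_i w_i = a + 1 − 1/q, and has last entry 1/q.) -/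

import Mathlib

/-- **Lemma 2.4 (le:ww).** Let `x j` (shifted so that Lean's `x 0` is the paper's
`x₋₁ = a` and `x (j+1)` is the paper's `x_j`) be the successive weights of the
weight expansion of `a` with multiplicities `ℓ 0, …, ℓ N`, and let `q` (shifted so
that `q 0 = q₋₁ = 0`, `q 1 = q₀ = 1`) be the convergent denominators of
`[ℓ 0; ℓ 1, …, ℓ N]`.  If all weights `x_0, …, x_N` are positive and `x_{N+1} = 0`,
then `Σ ℓ_j x_j² = a`, `Σ ℓ_j x_j = a + 1 − x_N`, and `x_N = 1/q_N`. -/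
theorem stmt_0 (N : ℕ) (ℓ : ℕ → ℕ) (hℓ : ∀ j ≤ N, 0 < ℓ j)
    (a : ℝ) (x : ℕ → ℝ) (q : ℕ → ℕ)
    (hx0 : x 0 = a) (hx1 : x 1 = 1)
    (hxrec : ∀ j ≤ N, x (j + 2) = x j - (ℓ j : ℝ) * x (j + 1))
    (hxpos : ∀ j ≤ N, 0 < x (j + 1))
    (hxend : x (N + 2) = 0)
    (hq0 : q 0 = 0) (hq1 : q 1 = 1)
    (hqrec : ∀ k, 1 ≤ k → k ≤ N → q (k + 1) = ℓ k * q k + q (k - 1)) :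
    (∑ j ∈ Finset.range (N + 1), (ℓ j : ℝ) * (x (j + 1)) ^ 2 = a) ∧
    (∑ j ∈ Finset.range (N + 1), (ℓ j : ℝ) * x (j + 1) = a + 1 - x (N + 1)) ∧
    x (N + 1) = 1 / (q (N + 1) : ℝ) := by
  have key : ∀ j ∈ Finset.range (N + 1), (ℓ j : ℝ) * x (j + 1) = x j - x (j + 2) := by
    intro j hj
    have h := hxrec j (Nat.lt_succ_iff.mp (Finset.mem_range.mp hj))
    linarith
  have h1 : ∑ j ∈ Finset.range (N + 1), (ℓ j : ℝ) * (x (j + 1)) ^ 2 = a := by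
    have hcong : ∀ j ∈ Finset.range (N + 1), (ℓ j : ℝ) * (x (j + 1)) ^ 2
        = (fun i => x i * x (i + 1)) j - (fun i => x i * x (i + 1)) (j + 1) := by
      intro j hj
      have h := key j hj
      simp only
      linear_combination x (j + 1) * h
    rw [Finset.sum_congr rfl hcong, Finset.sum_range_sub' (fun i => x i * x (i + 1))]
    simp [hx0, hx1, hxend]
  have h2 : ∑ j ∈ Finset.range (N + 1), (ℓ j : ℝ) * x (j + 1) = a + 1 - x (N + 1) := by
    have hcong : ∀ j ∈ Finset.range (N + 1), (ℓ j : ℝ) * x (j + 1)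
        = (fun i => x i + x (i + 1)) j - (fun i => x i + x (i + 1)) (j + 1) := by
      intro j hj
      have h := key j hj
      simp only
      linarith
    rw [Finset.sum_congr rfl hcong, Finset.sum_range_sub' (fun i => x i + x (i + 1))]
    simp [hx0, hx1, hxend]
  have hK : ∀ k, k ≤ N → (q (k + 1) : ℝ) * x (k + 1) + (q k : ℝ) * x (k + 2) = 1 := by
    intro k
    induction k with
    | zero => intro _; simp [hq0, hq1, hx1]
    | succ k ih =>
      intro hk
      have ihk := ih (le_of_lt (Nat.lt_of_succ_le hk))
      have hqr := hqrec (k + 1) (Nat.succ_le_succ (Nat.zero_le k)) hk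
      simp only [Nat.add_sub_cancel] at hqr
      have hq' : (q (k + 2) : ℝ) = (ℓ (k + 1) : ℝ) * q (k + 1) + q k := by
        rw [hqr]; push_cast; ring
      have hxr := hxrec (k + 1) hk
      rw [hxr]
      linear_combination ihk + x (k + 2) * hq'
  have hKN := hK N le_rfl
  rw [hxend] at hKN
  have hmain : (q (N + 1) : ℝ) * x (N + 1) = 1 := by linarith
  have hqne : (q (N + 1) : ℝ) ≠ 0 := by
    intro h; rw [h] at hmain; simp at hmain
  refine ⟨h1, h2, ?_⟩
  field_simp
  linarith
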